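/- (The paper's Lemma 5.7: Q · D̄ ⊆ D̄, via the stable meet operator.) Let R be a binary relation on P with R(p,q) implying p ≤ q and such that p ≤ q ≤ r together with R(p,r) implies R(p,q). Assume: (i) q ⊓ p ∈ P whenever p ∈ P, q ∈ Q and ⊥ ≠ q ≤ π(p); (ii) stable meets exist, i.e. whenever p, r ∈ P with r ≤ p and R(r, π(r) ⊓ p), there is s ∈ P with R(s,p), π(s) = π(p), and π(r) ⊓ s = r. Then: (1) if p ∈ P is frozen and s ∈ P satisfies R(s,p) and π(s) = π(p), then π₁(s ⊓ b) = π₁(p ⊓ b) for all b ∈ B₀ and π₀(s ⊓ b) = π₀(p ⊓ b) for all b ∈ B₁; (2) if p ∈ P is frozen, q ∈ Q and ⊥ ≠ q ≤ π(p), then q ⊓ p is frozen. -/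

import Mathlib

/-
STATEMENT 16 (Lemma 5.7: Q · D̄ ⊆ D̄, via the stable meet operator).
-/

namespace Stmt16

variable {B : Type*} [CompleteBooleanAlgebra B]

/-- `A` is a complete subalgebra of the complete Boolean algebra `B`. -/
def IsCompleteSubalgebra (A : Set B) : Prop :=
  ⊤ ∈ A ∧ (∀ a ∈ A, aᶜ ∈ A) ∧ ∀ S ⊆ A, sSup S ∈ A

/-- The canonical projection onto `A`. -/
def proj (A : Set B) (b : B) : B := sInf {a | a ∈ A ∧ b ≤ a}

/-- `p` is frozen (i.e. `p ∈ D̄(Q,P,f,λ₀)`): for every `q ∈ P` with `R(q,p)`,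
`π₁(q ⊓ b) = π(q) ⊓ π₁(p ⊓ b)` for all `b ∈ B₀` and
`π₀(q ⊓ b) = π(q) ⊓ π₀(p ⊓ b)` for all `b ∈ B₁`. -/
def Frozen (Q B0 B1 P : Set B) (R : B → B → Prop) (p : B) : Prop :=
  ∀ q ∈ P, R q p →
    (∀ b ∈ B0, proj B1 (q ⊓ b) = proj Q q ⊓ proj B1 (p ⊓ b)) ∧
    (∀ b ∈ B1, proj B0 (q ⊓ b) = proj Q q ⊓ proj B0 (p ⊓ b))

lemma sInf_mem_of {A : Set B} (hA : IsCompleteSubalgebra A) {S : Set B} (hS : S ⊆ A) :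
    sInf S ∈ A := by
  have h1 : (Compl.compl '' S : Set B) ⊆ A := by
    rintro x ⟨y, hy, rfl⟩; exact hA.2.1 y (hS hy)
  have h2 : sSup (Compl.compl '' S) ∈ A := hA.2.2 _ h1
  have h3 : sInf S = (sSup (Compl.compl '' S))ᶜ := by
    rw [sSup_image]
    simp [compl_iSup, sInf_eq_iInf]
  rw [h3]; exact hA.2.1 _ h2

lemma proj_mem {A : Set B} (hA : IsCompleteSubalgebra A) (b : B) : proj A b ∈ A :=
  sInf_mem_of hA (fun _ hx => hx.1)

lemma le_proj (A : Set B) (b : B) : b ≤ proj A b :=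
  le_sInf (fun _ hx => hx.2)

lemma proj_le {A : Set B} {a b : B} (ha : a ∈ A) (h : b ≤ a) : proj A b ≤ a :=
  sInf_le ⟨ha, h⟩

lemma proj_mono (A : Set B) {b c : B} (h : b ≤ c) : proj A b ≤ proj A c :=
  le_sInf (fun x hx => sInf_le ⟨hx.1, h.trans hx.2⟩)

lemma proj_self {A : Set B} {a : B} (ha : a ∈ A) : proj A a = a :=
  le_antisymm (proj_le ha le_rfl) (le_proj A a)

lemma sup_mem {A : Set B} (hA : IsCompleteSubalgebra A) {a c : B} (ha : a ∈ A) (hc : c ∈ A) :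
    a ⊔ c ∈ A := by
  have := hA.2.2 {a, c} (by rintro x (rfl | rfl) <;> assumption)
  rwa [sSup_pair] at this

lemma proj_inf {A : Set B} (hA : IsCompleteSubalgebra A) {a : B} (ha : a ∈ A) (x : B) :
    proj A (a ⊓ x) = a ⊓ proj A x := by
  apply le_antisymm
  · exact le_inf (proj_le ha inf_le_left) (proj_mono A inf_le_right)
  · apply le_sInf
    rintro c ⟨hc, hxc⟩
    have hx : x ≤ aᶜ ⊔ c := by
      rw [sup_comm, ← himp_eq]
      exact le_himp_iff.2 (by rwa [inf_comm])
    have : proj A x ≤ aᶜ ⊔ c := proj_le (sup_mem hA (hA.2.1 a ha) hc) hx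
    calc a ⊓ proj A x ≤ a ⊓ (aᶜ ⊔ c) := inf_le_inf_left a this
      _ ≤ c := by rw [inf_sup_left]; simp

theorem Q_meet_frozen (Q B0 B1 P : Set B)
    (hQ : IsCompleteSubalgebra Q) (hB0 : IsCompleteSubalgebra B0)
    (hB1 : IsCompleteSubalgebra B1)
    (hQB0 : Q ⊆ B0) (hQB1 : Q ⊆ B1)
    (hPne : ∀ p ∈ P, p ≠ ⊥)
    (R : B → B → Prop)
    (hRle : ∀ a b : B, R a b → a ≤ b)
    (hRer : ∀ a b c : B, a ≤ b → b ≤ c → R a c → R a b)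
    -- (i) P is closed under meets with suitable elements of Q:
    (h_meet : ∀ p ∈ P, ∀ q ∈ Q, q ≠ ⊥ → q ≤ proj Q p → q ⊓ p ∈ P)
    -- (ii) stable meets exist:
    (h_stm : ∀ p ∈ P, ∀ r ∈ P, r ≤ p → R r (proj Q r ⊓ p) →
      ∃ s ∈ P, R s p ∧ proj Q s = proj Q p ∧ proj Q r ⊓ s = r) :
    -- (1)
    (∀ p ∈ P, Frozen Q B0 B1 P R p → ∀ s ∈ P, R s p → proj Q s = proj Q p →
      (∀ b ∈ B0, proj B1 (s ⊓ b) = proj B1 (p ⊓ b)) ∧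
      (∀ b ∈ B1, proj B0 (s ⊓ b) = proj B0 (p ⊓ b))) ∧
    -- (2)
    (∀ p ∈ P, Frozen Q B0 B1 P R p → ∀ q ∈ Q, q ≠ ⊥ → q ≤ proj Q p →
      Frozen Q B0 B1 P R (q ⊓ p)) := by
  -- proj B1 (p ⊓ b) ≤ proj Q p, and likewise for B0
  have key1 : ∀ p b : B, proj B1 (p ⊓ b) ≤ proj Q p :=
    fun p b => proj_le (hQB1 (proj_mem hQ p)) (inf_le_left.trans (le_proj Q p))
  have key0 : ∀ p b : B, proj B0 (p ⊓ b) ≤ proj Q p :=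
    fun p b => proj_le (hQB0 (proj_mem hQ p)) (inf_le_left.trans (le_proj Q p))
  have part1 : ∀ p ∈ P, Frozen Q B0 B1 P R p → ∀ s ∈ P, R s p → proj Q s = proj Q p →
      (∀ b ∈ B0, proj B1 (s ⊓ b) = proj B1 (p ⊓ b)) ∧
      (∀ b ∈ B1, proj B0 (s ⊓ b) = proj B0 (p ⊓ b)) := by
    intro p hp hfr s hs hRsp hps
    obtain ⟨h1, h0⟩ := hfr s hs hRsp
    constructor
    · intro b hb
      rw [h1 b hb, hps, inf_eq_right.2 (key1 p b)]
    · intro b hb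
      rw [h0 b hb, hps, inf_eq_right.2 (key0 p b)]
  refine ⟨part1, ?_⟩
  intro p hp hfr q hqQ hqne hqle
  intro r hr hRr
  -- r ≤ q ⊓ p ≤ p
  have hrqp : r ≤ q ⊓ p := hRle _ _ hRr
  have hrp : r ≤ p := hrqp.trans inf_le_right
  -- π(r) ≤ q
  have hπrq : proj Q r ≤ q := proj_le hqQ (hrqp.trans inf_le_left)
  have hrπr : r ≤ proj Q r ⊓ p := le_inf (le_proj Q r) hrp
  have hRr' : R r (proj Q r ⊓ p) :=
    hRer _ _ _ hrπr (inf_le_inf_right p hπrq) hRr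
  obtain ⟨s, hsP, hRsp, hπs, hstm⟩ := h_stm p hp r hr hrp hRr'
  have hs1 := (part1 p hp hfr s hsP hRsp hπs).1
  have hs0 := (part1 p hp hfr s hsP hRsp hπs).2
  have hπrQ : proj Q r ∈ Q := proj_mem hQ r
  constructor
  · intro b hb
    have : r ⊓ b = proj Q r ⊓ (s ⊓ b) := by rw [← inf_assoc, hstm]
    rw [this, proj_inf hB1 (hQB1 hπrQ), hs1 b hb]
    have hq1 : q ∈ B1 := hQB1 hqQ
    have : q ⊓ p ⊓ b = q ⊓ (p ⊓ b) := inf_assoc q p b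
    rw [this, proj_inf hB1 hq1, ← inf_assoc, inf_eq_left.2 hπrq]
  · intro b hb
    have : r ⊓ b = proj Q r ⊓ (s ⊓ b) := by rw [← inf_assoc, hstm]
    rw [this, proj_inf hB0 (hQB0 hπrQ), hs0 b hb]
    have hq0 : q ∈ B0 := hQB0 hqQ
    have : q ⊓ p ⊓ b = q ⊓ (p ⊓ b) := inf_assoc q p b
    rw [this, proj_inf hB0 hq0, ← inf_assoc, inf_eq_left.2 hπrq]

end Stmt16
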